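/- Let f : A → B be a homomorphism of commutative rings and J an ideal of B. Set A' := A⋈^f J and J' := {0} × J = {(0, j) : j ∈ J}, which is an ideal of A'. Then the simple amalgamation A'⋈J' := {(x, x + j') : x ∈ A', j' ∈ J'} (a subring of A' × A') is isomorphic as a ring to A⋈^{f⁽²⁾}(J × J) = {(a, (f(a)+j₁, f(a)+j₂)) : a ∈ A, j₁, j₂ ∈ J}, where f⁽²⁾ : A → B × B is the diagonal homomorphism a ↦ (f(a), f(a)); an isomorphism is given by ((a, f(a)+j₁), (a, f(a)+j₁) + (0, j₂)) ↦ (a, (f(a)+j₁, f(a)+j₁+j₂)). -/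

import Mathlib

/-- The amalgamation `A ⋈^f J = {(a, f a + j) | a ∈ A, j ∈ J}` of `A` with `B`
along the ideal `J` of `B`, with respect to the ring homomorphism `f : A → B`,
as a subring of the product ring `A × B`. -/
def amalgamation {A B : Type*} [CommRing A] [CommRing B] (f : A →+* B) (J : Ideal B) :
    Subring (A × B) where
  carrier := {x : A × B | ∃ a : A, ∃ j ∈ J, x = (a, f a + j)}
  one_mem' := ⟨1, 0, J.zero_mem, by simp; rfl⟩
  zero_mem' := ⟨0, 0, J.zero_mem, by simp; rfl⟩
  mul_mem' := by
    rintro x y ⟨a, j, hj, rfl⟩ ⟨c, k, hk, rfl⟩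
    refine ⟨a * c, f a * k + j * f c + j * k,
      J.add_mem (J.add_mem (J.mul_mem_left _ hk) (J.mul_mem_right _ hj)) (J.mul_mem_right _ hj),
      ?_⟩
    simp only [Prod.mk_mul_mk, map_mul, Prod.mk.injEq]
    exact ⟨trivial, by ring⟩
  add_mem' := by
    rintro x y ⟨a, j, hj, rfl⟩ ⟨c, k, hk, rfl⟩
    refine ⟨a + c, j + k, J.add_mem hj hk, ?_⟩
    simp only [Prod.mk_add_mk, map_add, Prod.mk.injEq]
    exact ⟨trivial, by ring⟩
  neg_mem' := by
    rintro x ⟨a, j, hj, rfl⟩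
    refine ⟨-a, -j, J.neg_mem hj, ?_⟩
    simp only [Prod.neg_mk, map_neg, Prod.mk.injEq]
    exact ⟨trivial, by ring⟩

/-- The ideal `J' = {0} × J = {(0, j) | j ∈ J}` of the amalgamation `A ⋈^f J`. -/
def zeroTimesJ {A B : Type*} [CommRing A] [CommRing B] (f : A →+* B) (J : Ideal B) :
    Ideal ↥(amalgamation f J) where
  carrier := {x : ↥(amalgamation f J) | ∃ j ∈ J, (x : A × B) = (0, j)}
  zero_mem' := ⟨0, J.zero_mem, by simp; rfl⟩
  add_mem' := by
    rintro x y ⟨j, hj, hx⟩ ⟨k, hk, hy⟩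
    refine ⟨j + k, J.add_mem hj hk, ?_⟩
    show ((x : A × B) + (y : A × B)) = ((0 : A), j + k)
    rw [hx, hy, Prod.mk_add_mk, add_zero]
  smul_mem' := by
    rintro c x ⟨j, hj, hx⟩
    refine ⟨(c : A × B).2 * j, J.mul_mem_left _ hj, ?_⟩
    show ((c : A × B) * (x : A × B)) = ((0 : A), (c : A × B).2 * j)
    rw [hx, Prod.ext_iff]
    exact ⟨mul_zero _, rfl⟩

theorem statement19 {A B : Type*} [CommRing A] [CommRing B] (f : A →+* B) (J : Ideal B) :
    ∃ e : ↥(amalgamation (RingHom.id ↥(amalgamation f J)) (zeroTimesJ f J)) ≃+*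
        ↥(amalgamation (f.prod f) (J.prod J)),
      ∀ z : amalgamation (RingHom.id ↥(amalgamation f J)) (zeroTimesJ f J),
        ((e z : A × (B × B))) =
          (z.val.1.val.1, (z.val.1.val.2, z.val.2.val.2)) := by
  classical
  have mem : ∀ z : ↥(amalgamation (RingHom.id ↥(amalgamation f J)) (zeroTimesJ f J)),
      ((z.val.1.val.1, (z.val.1.val.2, z.val.2.val.2)) : A × B × B) ∈
        amalgamation (f.prod f) (J.prod J) := by
    rintro ⟨z, x', j', hj', rfl⟩
    obtain ⟨j, hj, hj'eq⟩ := hj'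
    obtain ⟨a, j₁, hj₁, hx'⟩ := x'.2
    refine ⟨a, (j₁, j₁ + j), (Ideal.mem_prod J J).mpr ⟨hj₁, J.add_mem hj₁ hj⟩, ?_⟩
    have h2 : ((x' + j' : ↥(amalgamation f J)) : A × B) = (a, f a + (j₁ + j)) := by
      push_cast
      rw [hx', hj'eq, Prod.mk_add_mk, add_zero, add_assoc]
    simp only [RingHom.id_apply, hx', h2, RingHom.prod_apply, Prod.mk.injEq, Prod.mk_add_mk]
  have fst_eq : ∀ z : ↥(amalgamation (RingHom.id ↥(amalgamation f J)) (zeroTimesJ f J)),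
      (z.val.2 : A × B).1 = (z.val.1 : A × B).1 := by
    rintro ⟨z, x', j', hj', rfl⟩
    obtain ⟨j, hj, hj'eq⟩ := hj'
    show ((x' + j' : ↥(amalgamation f J)) : A × B).1 = _
    push_cast
    rw [hj'eq]
    simp
  let φ : ↥(amalgamation (RingHom.id ↥(amalgamation f J)) (zeroTimesJ f J)) →+*
      ↥(amalgamation (f.prod f) (J.prod J)) :=
    { toFun := fun z => ⟨(z.val.1.val.1, (z.val.1.val.2, z.val.2.val.2)), mem z⟩
      map_one' := rfl
      map_mul' := fun x y => rfl
      map_zero' := rfl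
      map_add' := fun x y => rfl }
  have hinj : Function.Injective φ := by
    intro z w h
    have h' : ((z.val.1.val.1, (z.val.1.val.2, z.val.2.val.2)) : A × B × B) =
        (w.val.1.val.1, (w.val.1.val.2, w.val.2.val.2)) :=
      congrArg (fun t : ↥(amalgamation (f.prod f) (J.prod J)) => (t : A × B × B)) h
    simp only [Prod.mk.injEq] at h'
    obtain ⟨h1, h2, h3⟩ := h'
    ext
    · exact h1
    · exact h2
    · rw [fst_eq z, fst_eq w]; exact h1
    · exact h3
  have hsurj : Function.Surjective φ := by
    rintro ⟨w, a, j, hjm, rfl⟩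
    rw [Ideal.mem_prod J J] at hjm
    let x₁ : ↥(amalgamation f J) := ⟨(a, f a + j.1), a, j.1, hjm.1, rfl⟩
    let x₂ : ↥(amalgamation f J) := ⟨(a, f a + j.2), a, j.2, hjm.2, rfl⟩
    have hd : x₂ - x₁ ∈ zeroTimesJ f J := by
      refine ⟨j.2 - j.1, J.sub_mem hjm.2 hjm.1, ?_⟩
      show ((x₂ : A × B) - (x₁ : A × B)) = _
      simp [x₁, x₂, Prod.ext_iff]
    refine ⟨⟨(x₁, x₂), x₁, x₂ - x₁, hd, ?_⟩, ?_⟩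
    · simp
    · apply Subtype.ext
      show ((a, (f a + j.1, f a + j.2)) : A × B × B) = (a, (f.prod f) a + j)
      simp [Prod.ext_iff, RingHom.prod_apply]
  exact ⟨RingEquiv.ofBijective φ ⟨hinj, hsurj⟩, fun z => rfl⟩
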